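/- Suppose the pairing conjecture holds in F_2^{n-1}. Then for any 2^{n-1} nonzero vectors v_1, ..., v_{2^{n-1}} in F_2^n satisfying v_{2i-1} = v_{2i} for all 1 ≤ i ≤ 2^{n-2}, there exists a partition of F_2^n into pairs (p_i, q_i) such that p_i + q_i = v_i for all i. -/
import Mathlib

set_option linter.dupNamespace false



/-- A partition of `F_2^n` into `2^{n-1}` pairs `(p i, q i)`: the `2^n` vectors
`p i, q i` are pairwise distinct and cover all of `F_2^n`. -/
def PairPartition (n : ℕ) (p q : Fin (2 ^ (n - 1)) → (Fin n → ZMod 2)) : Prop :=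
  Function.Bijective (fun x : Fin (2 ^ (n - 1)) × Bool => if x.2 then p x.1 else q x.1)

/-- The pairing conjecture in `F_2^m`: any `2^{m-1}` nonzero vectors summing to zero are
the pair-sums of a partition of `F_2^m` into pairs. -/
def PairingConj (m : ℕ) : Prop :=
  ∀ v : Fin (2 ^ (m - 1)) → (Fin m → ZMod 2), (∀ i, v i ≠ 0) → ∑ i, v i = 0 →
    ∃ p q : Fin (2 ^ (m - 1)) → (Fin m → ZMod 2),
      PairPartition m p q ∧ ∀ i, p i + q i = v i

section PPauxSection

open Finset

namespace PPaux

lemma z2 : ∀ a b : ZMod 2, a + b + b = a := by decide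
lemma z2' : ∀ a b : ZMod 2, a + (a + b) = b := by decide
lemma zcases : ∀ a : ZMod 2, a = 0 ∨ a = 1 := by decide
lemma zself : ∀ a : ZMod 2, a + a = 0 := by decide

variable {M : ℕ}

lemma pself (x : Fin M → ZMod 2) : x + x = 0 := by
  funext i; exact zself _

lemma padd (x y : Fin M → ZMod 2) : x + y + y = x := by
  funext i; exact z2 _ _

/-- the projection along `c` (deleting coordinate `k`). -/
def phiHom (c : Fin (M+1) → ZMod 2) (k : Fin (M+1)) :
    (Fin (M+1) → ZMod 2) →+ (Fin M → ZMod 2) where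
  toFun x := fun i => x (k.succAbove i) + x k * c (k.succAbove i)
  map_zero' := by funext i; simp
  map_add' x y := by funext i; simp [Pi.add_apply]; ring

/-- the section (inserting `0` at coordinate `k`). -/
def sig (k : Fin (M+1)) (y : Fin M → ZMod 2) : Fin (M+1) → ZMod 2 :=
  k.insertNth 0 y

lemma sig_add (k : Fin (M+1)) (y y' : Fin M → ZMod 2) :
    sig k y + sig k y' = sig k (y + y') := by
  funext j
  rcases eq_or_ne j k with rfl | hj
  · simp [sig]
  · obtain ⟨i, rfl⟩ := Fin.exists_succAbove_eq (x := j) (y := k) hj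
    simp [sig]

variable {c : Fin (M+1) → ZMod 2} {k : Fin (M+1)}

lemma phi_sig (y : Fin M → ZMod 2) : phiHom c k (sig k y) = y := by
  funext i
  simp [phiHom, sig]

lemma sig_phi (hck : c k = 1) (x : Fin (M+1) → ZMod 2) : sig k (phiHom c k x) = x + x k • c := by
  funext j
  rcases eq_or_ne j k with rfl | hj
  · simp [sig, hck, Pi.smul_apply, smul_eq_mul]
    exact (zself _).symm
  · obtain ⟨i, rfl⟩ := Fin.exists_succAbove_eq (x := j) (y := k) hj
    simp [sig, phiHom, Pi.smul_apply, smul_eq_mul]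

lemma phi_c (hck : c k = 1) : phiHom c k c = 0 := by
  funext i
  simp [phiHom, hck]
  exact zself _

lemma sig_zero (k : Fin (M+1)) : sig k (0 : Fin M → ZMod 2) = 0 := by
  funext j
  rcases eq_or_ne j k with rfl | hj
  · simp [sig]
  · obtain ⟨i, rfl⟩ := Fin.exists_succAbove_eq (x := j) (y := k) hj
    simp [sig]

lemma eq_of_phi_eq_zero (hck : c k = 1) {x : Fin (M+1) → ZMod 2} (h : phiHom c k x = 0) :
    x = 0 ∨ x = c := by
  have h2 := sig_phi hck x
  rw [h, sig_zero] at h2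
  have h3 : x = x k • c := by
    have := congrArg (· + x k • c) h2.symm
    simpa [padd x (x k • c)] using this
  rcases zcases (x k) with h4 | h4
  · left; rw [h3, h4, zero_smul]
  · right; rw [h3, h4, one_smul]

lemma smul_eq_ite (a : ZMod 2) : a • c = if a = 1 then c else 0 := by
  rcases zcases a with rfl | rfl
  · simp
  · simp

/-- The lift equivalence `F_2^M × Bool ≃ F_2^{M+1}` along `c`. -/
def liftEquiv (hck : c k = 1) : (Fin M → ZMod 2) × Bool ≃ (Fin (M+1) → ZMod 2) where
  toFun ye := sig k ye.1 + (if ye.2 then c else 0)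
  invFun x := (phiHom c k x, decide (x k = 1))
  left_inv := by
    rintro ⟨y, e⟩
    have h1 : sig k y k = 0 := by simp [sig]
    rcases e with _ | _
    · simp only [if_neg Bool.false_ne_true, add_zero, Prod.mk.injEq]
      exact ⟨phi_sig y, by simp [h1]⟩
    · simp only [if_pos rfl, Prod.mk.injEq]
      constructor
      · simp [map_add, phi_sig, phi_c hck]
      · simp [Pi.add_apply, h1, hck]
  right_inv := by
    intro x
    simp only
    rw [sig_phi hck x]
    have h2 : (if (decide (x k = 1)) = true then c else 0) = x k • c := by
      rw [smul_eq_ite]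
      rcases zcases (x k) with h | h <;> simp [h]
    rw [h2, add_assoc, add_comm (x k • c), ← add_assoc, padd]

lemma card_pi (r : ℕ) : Fintype.card (Fin r → ZMod 2) = 2 ^ r := by
  simp [Fintype.card_fun]

lemma exists_not_mem {r : ℕ} (A : Finset (Fin r → ZMod 2))
    (hA : A.card < 2 ^ r) : ∃ x, x ∉ A := by
  by_contra h
  push_neg at h
  have : (Finset.univ : Finset (Fin r → ZMod 2)) ⊆ A := fun x _ => h x
  have := Finset.card_le_card this
  rw [Finset.card_univ, card_pi] at this
  omega

/-- `t` nonzero vectors of `F_2^r` (`r ≥ 2`) with prescribed sum `x`,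
provided `t = 0 → x = 0` and `t = 1 → x ≠ 0`. -/
lemma exists_nonzero_sum {r : ℕ} (hr : 2 ≤ r) :
    ∀ (t : ℕ) (x : Fin r → ZMod 2), (t = 0 → x = 0) → (t = 1 → x ≠ 0) →
      ∃ f : Fin t → (Fin r → ZMod 2), (∀ i, f i ≠ 0) ∧ ∑ i, f i = x := by
  intro t
  induction t using Nat.strong_induction_on with
  | _ t ih =>
    match t with
    | 0 => intro x h0 _; exact ⟨fun i => i.elim0, fun i => i.elim0, by simp [h0 rfl]⟩
    | 1 => intro x _ h1
           exact ⟨fun _ => x, fun _ => h1 rfl, by simp⟩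
    | (t+2) =>
      intro x _ _
      obtain ⟨a, ha⟩ := exists_not_mem ({0, x} : Finset (Fin r → ZMod 2))
        (lt_of_le_of_lt (Finset.card_insert_le _ _)
          (by simp only [Finset.card_singleton]
              calc 1 + 1 < 2^2 := by norm_num
              _ ≤ 2^r := Nat.pow_le_pow_right (by norm_num) hr))
      simp only [Finset.mem_insert, Finset.mem_singleton, not_or] at ha
      obtain ⟨g, hg0, hgs⟩ := ih (t+1) (by omega) (x + a)
        (by omega)
        (fun _ => by
          intro hxa
          apply ha.2
          have := congrArg (· + a) hxa
          simpa [add_assoc, padd x a] using this.symm)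
      refine ⟨Fin.cons a g, ?_, ?_⟩
      · intro i
        refine Fin.cases ?_ ?_ i
        · exact ha.1
        · exact fun j => hg0 j
      · rw [Fin.sum_cons, hgs, add_comm x a, ← add_assoc]
        have hself : a + a = 0 := by funext i; exact zself _
        rw [hself, zero_add]



/-- case-A index permutation -/
def rhoA (e : Bool) : Bool × Bool ≃ Bool × Bool where
  toFun bs := (bs.2, if bs.2 then bs.1 else xor bs.1 e)
  invFun bs := (if bs.1 then bs.2 else xor bs.2 e, bs.1)
  left_inv := by cases e <;> decide
  right_inv := by cases e <;> decide

/-- case-B index permutation -/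
def rhoB : Bool × Bool ≃ Bool × Bool where
  toFun bs := (!bs.1, !bs.2)
  invFun bs := (!bs.1, !bs.2)
  left_inv := by decide
  right_inv := by decide

lemma main (m : ℕ) (hconj : PairingConj (m+2))
    (w : Fin (2^(m+1)) → (Fin (m+3) → ZMod 2))
    (c : Fin (m+3) → ZMod 2) (hc : c ≠ 0)
    (hw0 : ∀ j, w j ≠ 0)
    (hA : (∀ j, w j ≠ c) → (∑ j, w j) = 0 ∨ (∑ j, w j) = c)
    (hB : (Finset.univ.filter (fun j => w j = c)).card = 1 →
      (∑ j, w j) ≠ 0 ∧ (∑ j, w j) ≠ c) :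
    ∃ p q : Fin (2^(m+1)) × Bool → (Fin (m+3) → ZMod 2),
      Function.Bijective
        (fun x : (Fin (2^(m+1)) × Bool) × Bool => if x.2 then p x.1 else q x.1) ∧
      ∀ z, p z + q z = w z.1 := by
  classical
  -- find a coordinate where c is 1
  obtain ⟨k, hck⟩ : ∃ k, c k = 1 := by
    by_contra h
    push_neg at h
    apply hc
    funext i
    rcases zcases (c i) with h0 | h1
    · exact h0
    · exact absurd h1 (h i)
  set s : Fin (m+3) → ZMod 2 := ∑ j, w j with hs
  set S : Finset (Fin (2^(m+1))) := Finset.univ.filter (fun j => w j = c) with hS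
  set x : Fin (m+2) → ZMod 2 := phiHom c k s with hx
  -- conditions for the extra vectors
  have cond0 : S.card = 0 → x = 0 := by
    intro h0
    have hemp : ∀ j, w j ≠ c := by
      intro j hj
      have : j ∈ S := by simp [hS, hj]
      rw [Finset.card_eq_zero] at h0
      simp [h0] at this
    rcases hA hemp with h | h
    · rw [hx, h, map_zero]
    · rw [hx, h]; exact phi_c hck
  have cond1 : S.card = 1 → x ≠ 0 := by
    intro h1 hx0
    obtain ⟨hs0, hsc⟩ := hB h1
    rcases eq_of_phi_eq_zero hck hx0 with h | h
    · exact hs0 h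
    · exact hsc h
  obtain ⟨f, hf0, hfs⟩ := exists_nonzero_sum (r := m+2) (by omega) S.card x cond0 cond1
  -- the quotient vectors
  obtain ⟨t, htpos, htneg⟩ :
      ∃ t : Fin (2^(m+1)) → (Fin (m+2) → ZMod 2),
        (∀ j (h : w j = c), t j = f (S.equivFin ⟨j, by simp [hS, h]⟩)) ∧
        (∀ j, w j ≠ c → t j = phiHom c k (w j)) :=
    ⟨fun j => if h : w j = c then f (S.equivFin ⟨j, by simp [hS, h]⟩)
      else phiHom c k (w j),
     fun j h => dif_pos h, fun j h => dif_neg h⟩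
  have ht0 : ∀ j, t j ≠ 0 := by
    intro j
    by_cases h : w j = c
    · rw [htpos j h]
      exact hf0 _
    · rw [htneg j h]
      intro h0
      rcases eq_of_phi_eq_zero hck h0 with h' | h'
      · exact hw0 j h'
      · exact h h'
  have htsum : ∑ j, t j = 0 := by
    have hsplit := Finset.sum_filter_add_sum_filter_not Finset.univ (fun j => w j = c) t
    have part1 : ∑ j ∈ S, t j = x := by
      rw [← Finset.sum_attach S t]
      have hta : ∀ a : {j // j ∈ S}, t a = f (S.equivFin a) := by
        rintro ⟨a, ha⟩
        have hwa : w a = c := by simpa [hS] using ha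
        rw [htpos a hwa]
      calc ∑ a ∈ S.attach, t a = ∑ a ∈ S.attach, f (S.equivFin a) :=
            Finset.sum_congr rfl (fun a _ => hta a)
        _ = ∑ i, f i := by
            rw [← Finset.univ_eq_attach]
            exact Equiv.sum_comp S.equivFin f
        _ = x := hfs
    have part2 : ∑ j ∈ Finset.univ.filter (fun j => ¬ w j = c), t j = x := by
      have h1 : ∀ j ∈ Finset.univ.filter (fun j => ¬ w j = c), t j = phiHom c k (w j) := by
        intro j hj
        rw [Finset.mem_filter] at hj
        exact htneg j hj.2
      rw [Finset.sum_congr rfl h1, ← map_sum]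
      have hmem : ∀ j ∈ S, w j = c := by
        intro j hj
        rw [hS, Finset.mem_filter] at hj
        exact hj.2
      have h2 : phiHom c k (∑ j ∈ S, w j) = 0 := by
        rw [Finset.sum_congr rfl hmem, Finset.sum_const, map_nsmul, phi_c hck, smul_zero]
      have h3 : s = ∑ j ∈ S, w j + ∑ j ∈ Finset.univ.filter (fun j => ¬ w j = c), w j := by
        rw [hs, ← Finset.sum_filter_add_sum_filter_not Finset.univ (fun j => w j = c) w, hS]
      have h4 := congrArg (phiHom c k) h3
      rw [map_add, h2, zero_add] at h4
      exact h4.symm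
    rw [← hsplit, ← hS, part1, part2]
    exact pself x
  -- apply the conjecture in the quotient
  obtain ⟨P, Q, hPQ, hsum⟩ := hconj t ht0 htsum
  -- the pieces of the construction
  set ρ : Fin (2^(m+1)) → (Bool × Bool ≃ Bool × Bool) :=
    fun j => if w j = c then rhoB else rhoA (decide (w j k = 1)) with hρ
  set ePQ : Fin (2^(m+1)) × Bool ≃ (Fin (m+2) → ZMod 2) := Equiv.ofBijective _ hPQ with hePQ
  set Efull : (Fin (2^(m+1)) × Bool) × Bool ≃ (Fin (m+3) → ZMod 2) :=
    (Equiv.prodAssoc _ _ _).trans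
      ((Equiv.prodShear (Equiv.refl (Fin (2^(m+1)))) ρ).trans
        ((Equiv.prodAssoc _ _ _).symm.trans
          ((Equiv.prodCongr ePQ (Equiv.refl Bool)).trans (liftEquiv hck)))) with hEfull
  refine ⟨fun z => Efull (z, true), fun z => Efull (z, false), ?_, ?_⟩
  · have hfn : (fun x : (Fin (2^(m+1)) × Bool) × Bool =>
        if x.2 then Efull (x.1, true) else Efull (x.1, false)) = ⇑Efull := by
      funext x
      obtain ⟨z, s'⟩ := x
      cases s' <;> rfl
    rw [hfn]
    exact Efull.bijective
  · rintro ⟨j, b⟩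
    show Efull ((j, b), true) + Efull ((j, b), false) = w j
    have key : ∀ s' : Bool, Efull ((j, b), s') =
        sig k (if (ρ j (b, s')).1 then P j else Q j) +
          (if (ρ j (b, s')).2 then c else 0) := fun s' => rfl
    rw [key true, key false]
    by_cases hwc : w j = c
    · rw [hρ]
      simp only [if_pos hwc]
      show sig k (if (!b) then P j else Q j) + 0 +
        (sig k (if (!b) then P j else Q j) + c) = w j
      rw [add_zero, hwc]
      funext i
      exact z2' _ _
    · rw [hρ]
      simp only [if_neg hwc]
      show sig k (P j) + (if b then c else 0) +
        (sig k (Q j) + (if (xor b (decide (w j k = 1))) then c else 0)) = w j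
      have hb : (if b then c else 0) + (if (xor b (decide (w j k = 1))) then c else 0)
          = (if (decide (w j k = 1)) then c else 0) := by
        cases b <;> cases hd : decide (w j k = 1) <;>
          simp [hd, pself c]
      have hPQj : sig k (P j) + sig k (Q j) = w j + (w j k) • c := by
        rw [sig_add, hsum j, htneg j hwc, sig_phi hck]
      have hsm : (w j k) • c = (if (decide (w j k = 1)) then c else 0) := by
        rw [smul_eq_ite]
        rcases zcases (w j k) with h | h <;> simp [h]
      calc sig k (P j) + (if b then c else 0) +
            (sig k (Q j) + (if (xor b (decide (w j k = 1))) then c else 0))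
          = (sig k (P j) + sig k (Q j)) +
            ((if b then c else 0) + (if (xor b (decide (w j k = 1))) then c else 0)) := by
            ring
        _ = (w j + (w j k) • c) + (w j k) • c := by rw [hPQj, hb, hsm]
        _ = w j := padd _ _


/-- doubling equivalence -/
def dbl (N : ℕ) : Fin (N*2) ≃ Fin N × Bool where
  toFun i := (⟨i.val / 2, by omega⟩, decide (i.val % 2 = 1))
  invFun jb := ⟨2 * jb.1.val + (if jb.2 then 1 else 0), by
    rcases jb with ⟨⟨j, hj⟩, b⟩
    cases b <;> simp <;> omega⟩
  left_inv := by
    intro i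
    apply Fin.ext
    simp only
    rcases Nat.mod_two_eq_zero_or_one i.val with h | h <;> simp [h] <;> omega
  right_inv := by
    rintro ⟨⟨j, hj⟩, b⟩
    cases b <;> refine Prod.ext (Fin.ext ?_) ?_ <;> simp <;> omega

lemma dbl_symm_val (N : ℕ) (j : Fin N) (b : Bool) :
    (((dbl N).symm (j, b)) : ℕ) = 2 * j.val + (if b then 1 else 0) := rfl

end PPaux

end PPauxSection

/-- If the pairing conjecture holds in `F_2^{n-1}`, then any `2^{n-1}` nonzero vectors in
`F_2^n` with `v_{2i-1} = v_{2i}` for all `i` are realized as the pair-sums of a partition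
of `F_2^n` into pairs. -/
theorem pairing_of_paired_values (n : ℕ) (hconj : PairingConj (n - 1))
    (v : Fin (2 ^ (n - 1)) → (Fin n → ZMod 2))
    (hnz : ∀ i, v i ≠ 0)
    (hpair : ∀ (j : ℕ) (h : 2 * j + 1 < 2 ^ (n - 1)),
      v ⟨2 * j, lt_trans (Nat.lt_succ_self _) h⟩ = v ⟨2 * j + 1, h⟩) :
    ∃ p q : Fin (2 ^ (n - 1)) → (Fin n → ZMod 2),
      PairPartition n p q ∧ ∀ i, p i + q i = v i := by
  match n, hconj, v, hnz, hpair with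
  | 0, hconj, v, hnz, hpair =>
    exact absurd (funext fun i => Fin.elim0 i) (hnz ⟨0, by norm_num⟩)
  | 1, hconj, v, hnz, hpair =>
    have key : ∀ wv : Fin 1 → ZMod 2, wv ≠ 0 →
        ∃ p q : Fin 1 → (Fin 1 → ZMod 2),
          Function.Bijective (fun x : Fin 1 × Bool => if x.2 then p x.1 else q x.1) ∧
          p 0 + q 0 = wv := by decide
    obtain ⟨p, q, h1, h2⟩ := key (v ⟨0, by norm_num⟩) (hnz ⟨0, by norm_num⟩)
    refine ⟨p, q, h1, ?_⟩
    intro i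
    have hi0 : i.val = 0 := by
      have h := i.isLt
      have h1 : (2:ℕ)^(1-1) = 1 := rfl
      omega
    rw [show i = ⟨0, by norm_num⟩ from Fin.ext hi0]
    exact h2
  | 2, hconj, v, hnz, hpair =>
    have key : ∀ wv : Fin 2 → ZMod 2, wv = 0 ∨
        ∃ p q : Fin 2 → (Fin 2 → ZMod 2),
          Function.Bijective (fun x : Fin 2 × Bool => if x.2 then p x.1 else q x.1) ∧
          (p 0 + q 0 = wv ∧ p 1 + q 1 = wv) := by decide
    have hv10 : v ⟨1, by norm_num⟩ = v ⟨0, by norm_num⟩ :=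
      (hpair 0 (by norm_num)).symm
    rcases key (v ⟨0, by norm_num⟩) with h0 | ⟨p, q, h1, h2, h3⟩
    · exact absurd h0 (hnz ⟨0, by norm_num⟩)
    refine ⟨p, q, h1, ?_⟩
    rintro ⟨iv, hi⟩
    match iv, hi with
    | 0, hi => exact h2
    | 1, hi => rw [show (⟨1, hi⟩ : Fin (2^(2-1))) = ⟨1, by norm_num⟩ from rfl, hv10]; exact h3
  | (m+3), hconj, v, hnz, hpair =>
    classical
    set d : Fin (2^(m+2)) ≃ Fin (2^(m+1)) × Bool := PPaux.dbl (2^(m+1)) with hd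
    set w : Fin (2^(m+1)) → (Fin (m+3) → ZMod 2) := fun j => v (d.symm (j, false)) with hw
    have hw0 : ∀ j, w j ≠ 0 := fun j => hnz _
    have hpow : (2:ℕ)^(m+2) = 2^(m+1) * 2 := by ring
    have hvw : ∀ i : Fin (2^(m+2)), v i = w (d i).1 := by
      intro i
      show v i = v (d.symm ((d i).1, false))
      rcases hb : (d i).2 with _ | _
      · have hthis : d.symm ((d i).1, false) = i := by
          rw [← hb]
          exact d.left_inv i
        rw [hthis]
      · have hthis : d.symm ((d i).1, true) = i := by
          rw [← hb]
          exact d.left_inv i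
        have hival : (i : ℕ) = 2 * ((d i).1 : ℕ) + 1 := by
          conv_lhs => rw [← hthis]
          exact rfl
        have hlt : 2 * ((d i).1 : ℕ) + 1 < 2^(m+2) := by
          rw [← hival]; exact i.isLt
        have h2 : (⟨2 * ((d i).1 : ℕ) + 1, hlt⟩ : Fin (2^(m+2))) = i :=
          Fin.ext hival.symm
        have h3 : (⟨2 * ((d i).1 : ℕ), lt_trans (Nat.lt_succ_self _) hlt⟩ : Fin (2^(m+2)))
            = d.symm ((d i).1, false) := by
          apply Fin.ext
          exact rfl
        calc v i = v ⟨2 * ((d i).1 : ℕ) + 1, hlt⟩ := by rw [h2]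
          _ = v ⟨2 * ((d i).1 : ℕ), lt_trans (Nat.lt_succ_self _) hlt⟩ :=
              (hpair ((d i).1 : ℕ) hlt).symm
          _ = v (d.symm ((d i).1, false)) := by rw [h3]
    -- choose the quotient direction c
    have hcard : ∀ A : Finset (Fin (m+3) → ZMod 2), A.card ≤ 2^(m+1) + 1 → A.card < 2^(m+3) := by
      intro A hA
      have h1 : (1:ℕ) ≤ 2^(m+1) := Nat.one_le_two_pow
      have h2 : (2:ℕ)^(m+3) = 4 * 2^(m+1) := by ring
      omega
    obtain ⟨c, hc, hcA, hcB⟩ :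
        ∃ c : Fin (m+3) → ZMod 2, c ≠ 0 ∧
          ((∀ j, w j ≠ c) → (∑ j, w j) = 0 ∨ (∑ j, w j) = c) ∧
          ((Finset.univ.filter (fun j => w j = c)).card = 1 →
            (∑ j, w j) ≠ 0 ∧ (∑ j, w j) ≠ c) := by
      set s : Fin (m+3) → ZMod 2 := ∑ j, w j with hs
      by_cases hs0 : s = 0
      · obtain ⟨c, hc⟩ := PPaux.exists_not_mem
          (insert 0 (Finset.image w Finset.univ))
          (hcard _ (le_trans (Finset.card_insert_le _ _)
            (by
              have := Finset.card_image_le (s := (Finset.univ : Finset (Fin (2^(m+1))))) (f := w)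
              simp only [Finset.card_univ, Fintype.card_fin] at this
              omega)))
        simp only [Finset.mem_insert, Finset.mem_image, not_or, not_exists] at hc
        obtain ⟨hc0, hcw⟩ := hc
        refine ⟨c, hc0, fun _ => Or.inl hs0, fun h1 => ?_⟩
        exfalso
        have hemp : Finset.univ.filter (fun j => w j = c) = ∅ := by
          apply Finset.filter_eq_empty_iff.mpr
          intro j _
          exact fun hj => hcw j ⟨Finset.mem_univ j, hj⟩
        rw [hemp] at h1
        simp at h1
      · by_cases hs1 : (Finset.univ.filter (fun j => w j = s)).card = 1
        · have hex : ∃ j0, w j0 ≠ s := by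
            by_contra h
            push_neg at h
            have : Finset.univ.filter (fun j => w j = s) = Finset.univ :=
              Finset.filter_eq_self.mpr (fun j _ => h j)
            rw [this, Finset.card_univ, Fintype.card_fin] at hs1
            have h1 : (1:ℕ) ≤ 2^m := Nat.one_le_two_pow
            have h2 : (2:ℕ)^(m+1) = 2 * 2^m := by ring
            omega
          obtain ⟨j0, hj0⟩ := hex
          refine ⟨w j0, hw0 j0, fun h => absurd rfl (h j0), fun _ => ⟨hs0, fun hsc => hj0 hsc.symm⟩⟩
        · exact ⟨s, hs0, fun _ => Or.inr rfl, fun h1 => absurd h1 hs1⟩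
    obtain ⟨p, q, hbij, hsumz⟩ := PPaux.main m hconj w c hc hw0 hcA hcB
    refine ⟨fun i => p (d i), fun i => q (d i), ?_, ?_⟩
    · exact hbij.comp (Equiv.prodCongr d (Equiv.refl Bool)).bijective
    · intro i
      rw [hvw i]
      exact hsumz (d i)
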